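/- Let X be a compact Hausdorff space, σ : X → X a homeomorphism, and f : ℤ × X → ℤ a map such that: for each n ∈ ℤ the map x ↦ f(n,x) is continuous; f(m+n, x) = f(m,x) + f(n, σᵐ(x)) for all m,n ∈ ℤ and x ∈ X; for each x ∈ X the map n ↦ f(n,x) is a bijection of ℤ; and for each n ∈ ℤ the map sending x to the unique m with f(m,x) = n is continuous. Then there is a positive integer N such that the sets X₁ := {x ∈ X : f(n,x) > 0 and f(−n,x) < 0 for all n > N} and X₂ := {x ∈ X : f(n,x) < 0 and f(−n,x) > 0 for all n > N} are open, satisfy σ(X₁) = X₁ and σ(X₂) = X₂, are disjoint, and X = X₁ ∪ X₂ (so X₁ and X₂ are clopen σ-invariant sets partitioning X). -/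

import Mathlib

open Set

theorem stmt2 {X : Type*} [TopologicalSpace X] [CompactSpace X] [T2Space X]
    (σ : X ≃ₜ X) (f : ℤ × X → ℤ)
    (hfc : ∀ n : ℤ, Continuous fun x => f (n, x))
    (hcoc : ∀ (m n : ℤ) (x : X), f (m + n, x) = f (m, x) + f (n, (σ.toEquiv ^ m) x))
    (hbij : ∀ x : X, Function.Bijective fun n : ℤ => f (n, x))
    (g : ℤ → X → ℤ)
    (hg : ∀ (n : ℤ) (x : X), f (g n x, x) = n)
    (hgc : ∀ n : ℤ, Continuous fun x => g n x) :
    ∃ N : ℕ, 0 < N ∧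
      IsOpen {x : X | ∀ n : ℤ, (N : ℤ) < n → 0 < f (n, x) ∧ f (-n, x) < 0} ∧
      IsOpen {x : X | ∀ n : ℤ, (N : ℤ) < n → f (n, x) < 0 ∧ 0 < f (-n, x)} ∧
      σ '' {x : X | ∀ n : ℤ, (N : ℤ) < n → 0 < f (n, x) ∧ f (-n, x) < 0}
        = {x : X | ∀ n : ℤ, (N : ℤ) < n → 0 < f (n, x) ∧ f (-n, x) < 0} ∧
      σ '' {x : X | ∀ n : ℤ, (N : ℤ) < n → f (n, x) < 0 ∧ 0 < f (-n, x)}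
        = {x : X | ∀ n : ℤ, (N : ℤ) < n → f (n, x) < 0 ∧ 0 < f (-n, x)} ∧
      Disjoint {x : X | ∀ n : ℤ, (N : ℤ) < n → 0 < f (n, x) ∧ f (-n, x) < 0}
        {x : X | ∀ n : ℤ, (N : ℤ) < n → f (n, x) < 0 ∧ 0 < f (-n, x)} ∧
      {x : X | ∀ n : ℤ, (N : ℤ) < n → 0 < f (n, x) ∧ f (-n, x) < 0}
        ∪ {x : X | ∀ n : ℤ, (N : ℤ) < n → f (n, x) < 0 ∧ 0 < f (-n, x)} = univ := by
  classical
  have hinj : ∀ (x : X) {a b : ℤ}, f (a, x) = f (b, x) → a = b := by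
    intro x a b h
    exact (hbij x).1 h
  have f0 : ∀ x : X, f (0, x) = 0 := by
    intro x
    have h := hcoc 0 0 x
    simp only [zpow_zero, add_zero, Equiv.Perm.coe_one, id_eq] at h
    omega
  have fne : ∀ (x : X) (n : ℤ), n ≠ 0 → f (n, x) ≠ 0 := by
    intro x n hn hc
    exact hn (hinj x (hc.trans (f0 x).symm))
  -- boundedness of continuous integer-valued functions
  have bdd : ∀ h : X → ℤ, Continuous h → ∃ C : ℤ, ∀ x, |h x| ≤ C := by
    intro h hc
    have hcomp : IsCompact (Set.range fun x => |h x|) :=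
      isCompact_range (continuous_abs.comp hc)
    have hfin : (Set.range fun x => |h x|).Finite := hcomp.finite DiscreteTopology.isDiscrete
    rcases hfin.bddAbove with ⟨C, hC⟩
    exact ⟨C, fun x => hC ⟨x, rfl⟩⟩
  obtain ⟨C1, hC1'⟩ := bdd (fun x => f (1, x)) (hfc 1)
  obtain ⟨C2, hC2'⟩ := bdd (fun x => f (-1, x)) (hfc (-1))
  set C : ℤ := max 1 (max C1 C2) with hCdef
  have hC0 : 1 ≤ C := le_max_left _ _
  have hC1 : ∀ y : X, |f (1, y)| ≤ C := fun y =>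
    le_trans (hC1' y) (le_trans (le_max_left _ _) (le_max_right _ _))
  have hC2 : ∀ y : X, |f (-1, y)| ≤ C := fun y =>
    le_trans (hC2' y) (le_trans (le_max_right _ _) (le_max_right _ _))
  -- bound on g for small values
  choose b hb using fun m : ℤ => bdd (g m) (hgc m)
  set Mn : ℕ := (Finset.Icc (-(2*C)) (2*C)).sup fun m => (b m).toNat with hMn
  set M : ℤ := max 1 (Mn : ℤ) with hMdef
  have hM0 : 1 ≤ M := le_max_left _ _
  have hM : ∀ m : ℤ, |m| ≤ 2*C → ∀ x, |g m x| ≤ M := by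
    intro m hm x
    have h1 : m ∈ Finset.Icc (-(2*C)) (2*C) := by
      rw [Finset.mem_Icc]
      constructor
      · linarith [neg_abs_le m]
      · linarith [le_abs_self m]
    have h2 : (b m).toNat ≤ Mn := Finset.le_sup (f := fun m => (b m).toNat) h1
    have h3 : b m ≤ (Mn : ℤ) := le_trans (Int.self_le_toNat _) (by exact_mod_cast h2)
    exact le_trans (hb m x) (le_trans h3 (le_max_right _ _))
  -- key: values at far times are large
  have key : ∀ (x : X) (n : ℤ), M < |n| → 2*C < |f (n, x)| := by
    intro x n hn
    by_contra hcon
    push_neg at hcon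
    have h1 := hg (f (n, x)) x
    have h2 : g (f (n, x)) x = n := hinj x h1
    have h3 := hM (f (n, x)) hcon x
    rw [h2] at h3
    exact absurd h3 (not_le.mpr hn)
  -- sign persistence
  have stepUp : ∀ (x : X) (n : ℤ), M < n →
      (0 < f (n, x) → 0 < f (n + 1, x)) ∧ (f (n, x) < 0 → f (n + 1, x) < 0) := by
    intro x n hn
    have h1 := hcoc n 1 x
    have hb' := hC1 ((σ.toEquiv ^ n) x)
    have hk := key x n (by rw [abs_of_pos (by omega)]; exact hn)
    rcases abs_le.mp hb' with ⟨hb1, hb2⟩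
    rcases lt_abs.mp hk with h | h <;> constructor <;> intro <;> omega
  have stepDown : ∀ (x : X) (n : ℤ), M < n →
      (0 < f (-n, x) → 0 < f (-(n+1), x)) ∧ (f (-n, x) < 0 → f (-(n+1), x) < 0) := by
    intro x n hn
    have h1 := hcoc (-n) (-1) x
    have h2 : -n + -1 = -(n+1) := by ring
    rw [h2] at h1
    have hb' := hC2 ((σ.toEquiv ^ (-n)) x)
    have hk := key x (-n) (by rw [abs_neg, abs_of_pos (by omega)]; exact hn)
    rcases abs_le.mp hb' with ⟨hb1, hb2⟩
    rcases lt_abs.mp hk with h | h <;> constructor <;> intro <;> omega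
  have posAll : ∀ x : X, 0 < f (M+1, x) → ∀ n : ℤ, M < n → 0 < f (n, x) := by
    intro x h n hn
    exact Int.le_induction (motive := fun n _ => 0 < f (n, x)) h (fun k hk hp => (stepUp x k (by omega)).1 hp) n (by omega)
  have negAll : ∀ x : X, f (M+1, x) < 0 → ∀ n : ℤ, M < n → f (n, x) < 0 := by
    intro x h n hn
    exact Int.le_induction (motive := fun n _ => f (n, x) < 0) h (fun k hk hp => (stepUp x k (by omega)).2 hp) n (by omega)
  have posNegAll : ∀ x : X, 0 < f (-(M+1), x) → ∀ n : ℤ, M < n → 0 < f (-n, x) := by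
    intro x h n hn
    exact Int.le_induction (motive := fun n _ => 0 < f (-n, x)) h (fun k hk hp => (stepDown x k (by omega)).1 hp) n (by omega)
  have negNegAll : ∀ x : X, f (-(M+1), x) < 0 → ∀ n : ℤ, M < n → f (-n, x) < 0 := by
    intro x h n hn
    exact Int.le_induction (motive := fun n _ => f (-n, x) < 0) h (fun k hk hp => (stepDown x k (by omega)).2 hp) n (by omega)
  -- opposite signs on the two sides (surjectivity)
  have opp : ∀ x : X, ¬ (0 < f (M+1, x) ∧ 0 < f (-(M+1), x)) := by
    rintro x ⟨h1, h2⟩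
    have hposAll : ∀ k : ℤ, M < |k| → 0 < f (k, x) := by
      intro k hk
      rcases lt_abs.mp hk with h | h
      · exact posAll x h1 k h
      · have := posNegAll x h2 (-k) (by omega)
        simpa using this
    set B : ℕ := (Finset.Icc (-M) M).sup (fun k => (f (k, x)).natAbs) with hB
    set v : ℤ := -((B : ℤ) + 1) with hv
    have hfk : f (g v x, x) = v := hg v x
    by_cases hcase : M < |g v x|
    · have := hposAll _ hcase
      omega
    · push_neg at hcase
      have hmem : g v x ∈ Finset.Icc (-M) M := by
        rw [Finset.mem_Icc]
        constructor
        · linarith [neg_abs_le (g v x)]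
        · linarith [le_abs_self (g v x)]
      have hle : (f (g v x, x)).natAbs ≤ B :=
        Finset.le_sup (f := fun k => (f (k, x)).natAbs) hmem
      rw [hfk] at hle
      omega
  have oppNeg : ∀ x : X, ¬ (f (M+1, x) < 0 ∧ f (-(M+1), x) < 0) := by
    rintro x ⟨h1, h2⟩
    have hnegAll : ∀ k : ℤ, M < |k| → f (k, x) < 0 := by
      intro k hk
      rcases lt_abs.mp hk with h | h
      · exact negAll x h1 k h
      · have := negNegAll x h2 (-k) (by omega)
        simpa using this
    set B : ℕ := (Finset.Icc (-M) M).sup (fun k => (f (k, x)).natAbs) with hB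
    set v : ℤ := (B : ℤ) + 1 with hv
    have hfk : f (g v x, x) = v := hg v x
    by_cases hcase : M < |g v x|
    · have := hnegAll _ hcase
      omega
    · push_neg at hcase
      have hmem : g v x ∈ Finset.Icc (-M) M := by
        rw [Finset.mem_Icc]
        constructor
        · linarith [neg_abs_le (g v x)]
        · linarith [le_abs_self (g v x)]
      have hle : (f (g v x, x)).natAbs ≤ B :=
        Finset.le_sup (f := fun k => (f (k, x)).natAbs) hmem
      rw [hfk] at hle
      omega
  -- behaviour under σ
  have shift : ∀ x : X, f (M+1, σ x) = f (M+2, x) - f (1, x) := by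
    intro x
    have h := hcoc 1 (M+1) x
    rw [zpow_one] at h
    have h2 : (1:ℤ) + (M+1) = M + 2 := by ring
    rw [h2] at h
    have h3 : σ.toEquiv x = σ x := rfl
    rw [h3] at h
    omega
  have posShift : ∀ x : X, 0 < f (M+1, x) → 0 < f (M+1, σ x) := by
    intro x h
    have h2 : 0 < f (M+2, x) := posAll x h (M+2) (by omega)
    have hk := key x (M+2) (by rw [abs_of_pos (by omega : (0:ℤ) < M+2)]; omega)
    have hb' := hC1 x
    have hs := shift x
    rcases abs_le.mp hb' with ⟨_, _⟩
    rcases lt_abs.mp hk with h | h <;> omega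
  have negShift : ∀ x : X, f (M+1, x) < 0 → f (M+1, σ x) < 0 := by
    intro x h
    have h2 : f (M+2, x) < 0 := negAll x h (M+2) (by omega)
    have hk := key x (M+2) (by rw [abs_of_pos (by omega : (0:ℤ) < M+2)]; omega)
    have hb' := hC1 x
    have hs := shift x
    rcases abs_le.mp hb' with ⟨_, _⟩
    rcases lt_abs.mp hk with h | h <;> omega
  have posIff : ∀ x : X, 0 < f (M+1, σ x) ↔ 0 < f (M+1, x) := by
    intro x
    constructor
    · intro h
      rcases lt_trichotomy (f (M+1, x)) 0 with hc | hc | hc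
      · have := negShift x hc; omega
      · exact absurd hc (fne x (M+1) (by omega))
      · exact hc
    · exact posShift x
  have negIff : ∀ x : X, f (M+1, σ x) < 0 ↔ f (M+1, x) < 0 := by
    intro x
    constructor
    · intro h
      rcases lt_trichotomy (f (M+1, x)) 0 with hc | hc | hc
      · exact hc
      · exact absurd hc (fne x (M+1) (by omega))
      · have := posShift x hc; omega
    · exact negShift x
  -- set characterizations
  have hX1 : ∀ x : X, (∀ n : ℤ, M < n → 0 < f (n, x) ∧ f (-n, x) < 0) ↔ 0 < f (M+1, x) := by
    intro x
    constructor
    · intro h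
      exact (h (M+1) (by omega)).1
    · intro h n hn
      have hneg : f (-(M+1), x) < 0 := by
        rcases lt_trichotomy (f (-(M+1), x)) 0 with hc | hc | hc
        · exact hc
        · exact absurd hc (fne x (-(M+1)) (by omega))
        · exact absurd ⟨h, hc⟩ (opp x)
      exact ⟨posAll x h n hn, negNegAll x hneg n hn⟩
  have hX2 : ∀ x : X, (∀ n : ℤ, M < n → f (n, x) < 0 ∧ 0 < f (-n, x)) ↔ f (M+1, x) < 0 := by
    intro x
    constructor
    · intro h
      exact (h (M+1) (by omega)).1
    · intro h n hn
      have hpos : 0 < f (-(M+1), x) := by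
        rcases lt_trichotomy (f (-(M+1), x)) 0 with hc | hc | hc
        · exact absurd ⟨h, hc⟩ (oppNeg x)
        · exact absurd hc (fne x (-(M+1)) (by omega))
        · exact hc
      exact ⟨negAll x h n hn, posNegAll x hpos n hn⟩
  refine ⟨M.toNat, by omega, ?_, ?_, ?_, ?_, ?_, ?_⟩
  all_goals have hMt : ((M.toNat : ℤ)) = M := Int.toNat_of_nonneg (by omega)
  · simp only [hMt]
    have hset : {x : X | ∀ n : ℤ, M < n → 0 < f (n, x) ∧ f (-n, x) < 0}
        = (fun x => f (M+1, x)) ⁻¹' {m : ℤ | 0 < m} := by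
      ext x; exact hX1 x
    rw [hset]
    exact (hfc (M+1)).isOpen_preimage _ (isOpen_discrete _)
  · simp only [hMt]
    have hset : {x : X | ∀ n : ℤ, M < n → f (n, x) < 0 ∧ 0 < f (-n, x)}
        = (fun x => f (M+1, x)) ⁻¹' {m : ℤ | m < 0} := by
      ext x; exact hX2 x
    rw [hset]
    exact (hfc (M+1)).isOpen_preimage _ (isOpen_discrete _)
  · simp only [hMt]
    have hset : {x : X | ∀ n : ℤ, M < n → 0 < f (n, x) ∧ f (-n, x) < 0}
        = {x : X | 0 < f (M+1, x)} := by
      ext x; exact hX1 x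
    rw [hset]
    ext y
    simp only [Set.mem_image, Set.mem_setOf_eq]
    constructor
    · rintro ⟨x, hx, rfl⟩
      exact (posIff x).mpr hx
    · intro hy
      exact ⟨σ.symm y, (posIff (σ.symm y)).mp (by rwa [σ.apply_symm_apply]),
        σ.apply_symm_apply y⟩
  · simp only [hMt]
    have hset : {x : X | ∀ n : ℤ, M < n → f (n, x) < 0 ∧ 0 < f (-n, x)}
        = {x : X | f (M+1, x) < 0} := by
      ext x; exact hX2 x
    rw [hset]
    ext y
    simp only [Set.mem_image, Set.mem_setOf_eq]
    constructor
    · rintro ⟨x, hx, rfl⟩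
      exact (negIff x).mpr hx
    · intro hy
      exact ⟨σ.symm y, (negIff (σ.symm y)).mp (by rwa [σ.apply_symm_apply]),
        σ.apply_symm_apply y⟩
  · simp only [hMt]
    rw [Set.disjoint_left]
    intro x hx1 hx2
    have h1 := (hX1 x).mp hx1
    have h2 := (hX2 x).mp hx2
    omega
  · simp only [hMt]
    ext x
    simp only [Set.mem_union, Set.mem_setOf_eq, Set.mem_univ, iff_true]
    rcases lt_trichotomy (f (M+1, x)) 0 with hc | hc | hc
    · exact Or.inr ((hX2 x).mpr hc)
    · exact absurd hc (fne x (M+1) (by omega))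
    · exact Or.inl ((hX1 x).mpr hc)
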